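/- The standard-representation so(N) weight system is multiplicative with respect to concatenation of permutations: let N ≥ 1, let α₁ be a permutation of {1,…,m₁} and α₂ a permutation of {1,…,m₂}, and let α₁#α₂ be the permutation of {1,…,m₁+m₂} acting as α₁ on {1,…,m₁} and sending m₁+l to m₁+α₂(l) for 1 ≤ l ≤ m₂. Then (1/N)·W_N(α₁#α₂) = ((1/N)·W_N(α₁)) · ((1/N)·W_N(α₂)), i.e., N·W_N(α₁#α₂) = W_N(α₁)·W_N(α₂). -/

import Mathlib

open Matrix

/-- The standard generators `X_{ij} = E_{ij} - E_{N+1-j, N+1-i}` of `so(N)`,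
as `N × N` matrices over `ℚ` (indices zero-based, so `N+1-i` becomes `Fin.rev i`). -/
noncomputable def soGen (N : ℕ) (i j : Fin N) : Matrix (Fin N) (Fin N) ℚ :=
  Matrix.single i j 1 - Matrix.single j.rev i.rev 1

/-- `W_N(α) = Tr (Σ_{i₁,…,i_m} X_{i₁ i_{α(1)}} ⋯ X_{i_m i_{α(m)}})`,
the (un-normalized) standard-representation so(N) weight of a permutation
`α` of `{1,…,m}`; the product is taken in order of increasing position. -/
noncomputable def soWeight (N m : ℕ) (α : Equiv.Perm (Fin m)) : ℚ :=
  Matrix.trace (∑ i : Fin m → Fin N,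
    ((List.finRange m).map fun k => soGen N (i k) (i (α k))).prod)

/-- The concatenation `α₁ # α₂` of permutations `α₁` of `{1,…,m₁}` and `α₂` of
`{1,…,m₂}`: the permutation of `{1,…,m₁+m₂}` acting as `α₁` on the first block
and sending `m₁ + l` to `m₁ + α₂(l)`. -/
def permConcat {m₁ m₂ : ℕ} (α₁ : Equiv.Perm (Fin m₁)) (α₂ : Equiv.Perm (Fin m₂)) :
    Equiv.Perm (Fin (m₁ + m₂)) :=
  finSumFinEquiv.permCongr (Equiv.sumCongr α₁ α₂)

/-- the matrix-valued sum whose trace is `soWeight` -/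
noncomputable def Smat (N m : ℕ) (α : Equiv.Perm (Fin m)) : Matrix (Fin N) (Fin N) ℚ :=
  ∑ i : Fin m → Fin N, ((List.finRange m).map fun k => soGen N (i k) (i (α k))).prod

lemma gEgi (N : ℕ) (g gi : Matrix (Fin N) (Fin N) ℚ) (i j a b : Fin N) :
    (g * Matrix.single i j (1:ℚ) * gi) a b = g a i * gi j b := by
  simp only [Matrix.mul_apply, Matrix.single, Matrix.of_apply, ite_mul, mul_ite,
    mul_one, mul_zero, one_mul, zero_mul, ite_and, Finset.sum_ite_eq, Finset.sum_ite_eq',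
    Finset.mem_univ, if_true]

lemma conj_soGen (N : ℕ) (g gi : Matrix (Fin N) (Fin N) ℚ)
    (ho : ∀ a b, gi a b = g b.rev a.rev) (i j : Fin N) :
    g * soGen N i j * gi = ∑ p, ∑ q, (g p i * gi j q) • soGen N p q := by
  ext a b
  have sum1 : ∑ p, ∑ q, g p i * gi j q * single p q (1:ℚ) a b = g a i * gi j b := by
    simp [Matrix.single, ite_and, mul_ite, Finset.sum_ite_eq, Finset.sum_ite_eq']
  have sum2 : ∑ p, ∑ q, g p i * gi j q * single q.rev p.rev (1:ℚ) a b
      = g b.rev i * gi j a.rev := by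
    simp [Matrix.single, Fin.rev_eq_iff, ite_and, mul_ite, Finset.sum_ite_eq,
      Finset.sum_ite_eq']
  simp only [soGen, mul_sub, sub_mul, Matrix.sub_apply, Matrix.sum_apply, Matrix.smul_apply,
    smul_eq_mul, gEgi, mul_sub, Finset.sum_sub_distrib, sum1, sum2]
  rw [ho i.rev b, ho j a.rev, Fin.rev_rev, Fin.rev_rev]
  ring

lemma listProd_sum {A β : Type*} [Fintype β] [NonAssocSemiring A] :
    ∀ (m : ℕ) (f : Fin m → β → A),
    ((List.finRange m).map fun k => ∑ b, f k b).prod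
      = ∑ c : Fin m → β, ((List.finRange m).map fun k => f k (c k)).prod := by
  intro m
  induction m with
  | zero => intro f; simp
  | succ m ih =>
    intro f
    rw [List.finRange_succ]
    simp only [List.map_cons, List.prod_cons, List.map_map, Function.comp_def]
    rw [ih (fun k b => f k.succ b)]
    rw [Finset.sum_mul_sum]
    rw [← Equiv.sum_comp (Fin.consEquiv (fun _ : Fin (m+1) => β))
        (fun x => f 0 (x 0) * (List.map (fun k => f k.succ (x k.succ)) (List.finRange m)).prod)]
    rw [Fintype.sum_prod_type]
    simp [Fin.consEquiv]

lemma listConj {A : Type*} [Semiring A] (g gi : A) (h1 : g * gi = 1) (h2 : gi * g = 1) :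
    ∀ (l : List A), g * l.prod * gi = (l.map fun M => g * M * gi).prod := by
  intro l
  induction l with
  | nil => simpa using h1
  | cons x l ih =>
    simp only [List.prod_cons, List.map_cons]
    rw [← ih]
    rw [show (g * x * gi) * (g * l.prod * gi) = g * x * ((gi * g) * (l.prod * gi)) from by
      simp only [mul_assoc]]
    rw [h2, one_mul]
    simp only [mul_assoc]

lemma listProd_smul {ι A : Type*} [Semiring A] [Algebra ℚ A] (c : ι → ℚ) (M : ι → A) :
    ∀ (l : List ι), (l.map fun k => c k • M k).prod = (l.map c).prod • (l.map M).prod := by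
  intro l
  induction l with
  | nil => simp
  | cons x l ih =>
    simp only [List.prod_cons, List.map_cons, ih, smul_mul_assoc, mul_smul_comm, smul_smul]
    congr 1
    ring

lemma keySum (N m : ℕ) (α : Equiv.Perm (Fin m)) (g gi : Matrix (Fin N) (Fin N) ℚ)
    (h1 : g * gi = 1) (p q : Fin m → Fin N) :
    ∑ i : Fin m → Fin N, ∏ k, (g (p k) (i k) * gi (i (α k)) (q k))
      = if ∀ k, p k = q (α.symm k) then 1 else 0 := by
  have step1 : ∀ i : Fin m → Fin N, ∏ k, (g (p k) (i k) * gi (i (α k)) (q k))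
      = ∏ k, (g (p k) (i k) * gi (i k) (q (α.symm k))) := by
    intro i
    rw [Finset.prod_mul_distrib, Finset.prod_mul_distrib]
    congr 1
    rw [← Equiv.prod_comp α (fun j => gi (i j) (q (α.symm j)))]
    simp
  simp only [step1]
  calc ∑ i : Fin m → Fin N, ∏ k, (g (p k) (i k) * gi (i k) (q (α.symm k)))
      = ∑ i : Fin m → Fin N,
          ((List.finRange m).map fun k => g (p k) (i k) * gi (i k) (q (α.symm k))).prod :=
        Finset.sum_congr rfl (fun i _ => Fin.prod_univ_def _)
    _ = ((List.finRange m).map fun k => ∑ t, g (p k) t * gi t (q (α.symm k))).prod :=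
        (listProd_sum (β := Fin N) m (fun k t => g (p k) t * gi t (q (α.symm k)))).symm
    _ = ∏ k, ∑ t, g (p k) t * gi t (q (α.symm k)) := (Fin.prod_univ_def _).symm
    _ = ∏ k, (if p k = q (α.symm k) then (1:ℚ) else 0) := by
        apply Finset.prod_congr rfl
        intro k _
        rw [← Matrix.mul_apply, h1, Matrix.one_apply]
    _ = if ∀ k, p k = q (α.symm k) then 1 else 0 := by
        rw [Finset.prod_boole]
        simp

lemma Smat_conj (N m : ℕ) (α : Equiv.Perm (Fin m)) (g gi : Matrix (Fin N) (Fin N) ℚ)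
    (h1 : g * gi = 1) (h2 : gi * g = 1) (ho : ∀ a b, gi a b = g b.rev a.rev) :
    g * Smat N m α * gi = Smat N m α := by
  unfold Smat
  rw [Finset.mul_sum, Finset.sum_mul]
  have e1 : ∀ i : Fin m → Fin N,
      g * ((List.finRange m).map fun k => soGen N (i k) (i (α k))).prod * gi
      = ∑ c : Fin m → Fin N × Fin N,
          (∏ k, (g (c k).1 (i k) * gi (i (α k)) (c k).2)) •
            ((List.finRange m).map fun k => soGen N (c k).1 (c k).2).prod := by
    intro i
    rw [listConj g gi h1 h2, List.map_map]
    have e2 : ((fun M => g * M * gi) ∘ fun k => soGen N (i k) (i (α k)))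
        = fun k => ∑ b : Fin N × Fin N, (g b.1 (i k) * gi (i (α k)) b.2) • soGen N b.1 b.2 := by
      funext k
      simp only [Function.comp_apply]
      rw [conj_soGen N g gi ho, Fintype.sum_prod_type]
    rw [e2, listProd_sum (β := Fin N × Fin N) m (fun k b => (g b.1 (i k) * gi (i (α k)) b.2) • soGen N b.1 b.2)]
    apply Finset.sum_congr rfl
    intro c _
    rw [listProd_smul (fun k => g (c k).1 (i k) * gi (i (α k)) (c k).2)
        (fun k => soGen N (c k).1 (c k).2), ← Fin.prod_univ_def]
  simp only [e1]
  rw [Finset.sum_comm]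
  simp only [← Finset.sum_smul]
  simp only [keySum N m α g gi h1]
  rw [← Equiv.sum_comp (Equiv.arrowProdEquivProdArrow (Fin m) (fun _ => Fin N) (fun _ => Fin N)).symm
      (fun c => (if ∀ k, (c k).1 = (c (α.symm k)).2 then (1:ℚ) else 0) •
        ((List.finRange m).map fun k => soGen N (c k).1 (c k).2).prod)]
  rw [Fintype.sum_prod_type]
  apply Finset.sum_congr rfl
  intro p _
  have hc : ∀ q : Fin m → Fin N,
      (∀ k, p k = q (α.symm k)) ↔ q = fun k => p (α k) := by
    intro q
    constructor
    · intro h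
      funext k
      have := h (α k)
      simp at this
      exact this.symm
    · rintro rfl k
      simp
  simp only [Equiv.arrowProdEquivProdArrow, Equiv.coe_fn_symm_mk, ite_smul, one_smul,
    zero_smul, hc]
  rw [Finset.sum_ite_eq' Finset.univ (fun k => p (α k))
      (fun q => ((List.finRange m).map fun k => soGen N (p k) (q k)).prod)]
  simp

lemma Smat_comm (N m : ℕ) (α : Equiv.Perm (Fin m)) (g gi : Matrix (Fin N) (Fin N) ℚ)
    (h1 : g * gi = 1) (h2 : gi * g = 1) (ho : ∀ a b, gi a b = g b.rev a.rev) :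
    g * Smat N m α = Smat N m α * g := by
  have h := Smat_conj N m α g gi h1 h2 ho
  calc g * Smat N m α = g * Smat N m α * (gi * g) := by rw [h2, mul_one]
    _ = (g * Smat N m α * gi) * g := by rw [← mul_assoc]
    _ = Smat N m α * g := by rw [h]

lemma Smat_offdiag (N m : ℕ) (α : Equiv.Perm (Fin m)) (p q : Fin N) (hpq : p ≠ q) :
    Smat N m α p q = 0 := by
  set a : ℚ := if p = p.rev then -1 else 2 with ha
  set t : Fin N → ℚ := fun i => if i = p then a else if i = p.rev then a⁻¹ else 1 with htdef
  have hane : a ≠ 0 := by rw [ha]; split_ifs <;> norm_num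
  have hne : ∀ i, t i ≠ 0 := by
    intro i; simp only [htdef]; split_ifs <;> simp [hane]
  have hrev : ∀ i, t i.rev = (t i)⁻¹ := by
    intro i
    by_cases h1 : i = p
    · by_cases h2 : p = p.rev
      · have e1 : i.rev = p := by rw [h1, ← h2]
        have e2 : t i = a := by simp [htdef, h1]
        have e3 : t i.rev = a := by simp [htdef, e1]
        rw [e2, e3, ha, if_pos h2]
        norm_num
      · have e2 : t i = a := by simp [htdef, h1]
        have e3 : t i.rev = a⁻¹ := by
          simp only [htdef, h1]
          rw [if_neg (fun h : p.rev = p => h2 h.symm)]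
          simp
        rw [e2, e3]
    · by_cases h2 : i = p.rev
      · have e1 : i.rev = p := by rw [h2, Fin.rev_rev]
        have hrp : p.rev ≠ p := fun h => h1 (h2.trans h)
        have e2 : t i = a⁻¹ := by
          simp only [htdef, h2]
          rw [if_neg hrp]
          simp
        have e3 : t i.rev = a := by simp [htdef, e1]
        rw [e2, e3, inv_inv]
      · have h3 : i.rev ≠ p := fun h => h2 (by rw [← h, Fin.rev_rev])
        have h4 : i.rev ≠ p.rev := fun h => h1 (Fin.rev_inj.mp h)
        simp only [htdef]
        rw [if_neg h1, if_neg h2, if_neg h3, if_neg h4, inv_one]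
  have tpq : t p ≠ t q := by
    have htp : t p = a := by simp [htdef]
    by_cases h2 : q = p.rev
    · have hppr : p ≠ p.rev := fun h => hpq (h.trans h2.symm)
      have : t q = a⁻¹ := by simp [htdef, h2, if_neg (fun h : p.rev = p => hppr h.symm), hppr]
      rw [htp, this, ha, if_neg hppr]
      norm_num
    · have : t q = 1 := by simp [htdef, if_neg (Ne.symm hpq), if_neg h2]
      rw [htp, this, ha]
      split_ifs <;> norm_num
  have hcomm : Matrix.diagonal t * Smat N m α = Smat N m α * Matrix.diagonal t := by
    apply Smat_comm N m α (Matrix.diagonal t) (Matrix.diagonal fun i => (t i)⁻¹)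
    · rw [Matrix.diagonal_mul_diagonal,
        show (fun i => t i * (t i)⁻¹) = fun _ => (1:ℚ) from funext fun i => mul_inv_cancel₀ (hne i),
        Matrix.diagonal_one]
    · rw [Matrix.diagonal_mul_diagonal,
        show (fun i => (t i)⁻¹ * t i) = fun _ => (1:ℚ) from funext fun i => inv_mul_cancel₀ (hne i),
        Matrix.diagonal_one]
    · intro x y
      by_cases hxy : x = y
      · subst hxy
        rw [Matrix.diagonal_apply_eq, Matrix.diagonal_apply_eq, hrev]
      · rw [Matrix.diagonal_apply_ne _ hxy,
          Matrix.diagonal_apply_ne _ (fun h => hxy (Fin.rev_inj.mp (h.symm)) )]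
  have hentry := congrArg (fun M => M p q) hcomm
  simp only [Matrix.diagonal_mul, Matrix.mul_diagonal] at hentry
  have hx : (t p - t q) * Smat N m α p q = 0 := by linear_combination hentry
  exact (mul_eq_zero.mp hx).resolve_left (sub_ne_zero.mpr tpq)

lemma E_mul {N : ℕ} (i j : Fin N) (c : ℚ) (S : Matrix (Fin N) (Fin N) ℚ) (a b : Fin N) :
    (single i j c * S) a b = if a = i then c * S j b else 0 := by
  simp only [Matrix.mul_apply, Matrix.single, Matrix.of_apply, ite_mul, one_mul, zero_mul,
    ite_and]
  simp [Finset.sum_ite_eq, eq_comm]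

lemma mul_E {N : ℕ} (i j : Fin N) (c : ℚ) (S : Matrix (Fin N) (Fin N) ℚ) (a b : Fin N) :
    (S * single i j c) a b = if b = j then S a i * c else 0 := by
  simp only [Matrix.mul_apply, Matrix.single, Matrix.of_apply, mul_ite, mul_one, mul_zero,
    ite_and]
  simp [Finset.sum_ite_eq', eq_comm]

lemma rev_fix_unique {N : ℕ} {a b : Fin N} (ha : a = a.rev) (hb : b = b.rev) : a = b := by
  have ha' := congrArg Fin.val ha
  have hb' := congrArg Fin.val hb
  simp [Fin.val_rev] at ha' hb'
  apply Fin.ext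
  omega

lemma Erev {N : ℕ} (i j x y : Fin N) (c : ℚ) :
    single j.rev i.rev c y.rev x.rev = single i j c x y := by
  simp only [Matrix.single, Matrix.of_apply, Fin.rev_inj]
  exact if_congr and_comm rfl rfl

lemma one_rev {N : ℕ} (x y : Fin N) :
    (1 : Matrix (Fin N) (Fin N) ℚ) y.rev x.rev = (1 : Matrix (Fin N) (Fin N) ℚ) x y := by
  simp [Matrix.one_apply, Fin.rev_inj, eq_comm]

lemma Smat_diag_rev (N m : ℕ) (α : Equiv.Perm (Fin m)) (p : Fin N) :
    Smat N m α p.rev p.rev = Smat N m α p p := by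
  set J : Matrix (Fin N) (Fin N) ℚ := Matrix.of fun a b => if b = a.rev then 1 else 0 with hJ
  have hJsq : J * J = 1 := by
    ext a b
    have hzero : ∀ x : Fin N, x ≠ a.rev → J a x * J x b = 0 := by
      intro x hx
      simp [hJ, hx]
    rw [Matrix.mul_apply, Fintype.sum_eq_single a.rev hzero]
    simp [hJ, Fin.rev_rev, Matrix.one_apply, eq_comm]
  have ho : ∀ x y, J x y = J y.rev x.rev := by
    intro x y
    by_cases h : y = x.rev
    · simp [hJ, h, Fin.rev_rev]
    · have h2 : ¬ x = y.rev := fun hh => h (by rw [hh, Fin.rev_rev])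
      simp only [hJ, Matrix.of_apply, if_neg h, Fin.rev_rev,
        if_neg (fun hh : x.rev = y => h hh.symm)]
  have hcomm := Smat_comm N m α J J hJsq hJsq ho
  have hentry := congrArg (fun M => M p p.rev) hcomm
  simp only [Matrix.mul_apply, hJ, Matrix.of_apply, ite_mul, mul_ite, one_mul, mul_one,
    zero_mul, mul_zero, Finset.sum_ite_eq, Finset.sum_ite_eq', Finset.mem_univ, if_true,
    Fin.rev_inj] at hentry
  exact hentry

lemma Smat_diag_stepA (N m : ℕ) (α : Equiv.Perm (Fin m)) (p z : Fin N)
    (hpz : p ≠ z) (hpzr : p ≠ z.rev) (hpr : p ≠ p.rev) (hz : z ≠ z.rev) :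
    Smat N m α p p = Smat N m α z z := by
  have ha2 : single p z (1:ℚ) * single p z (1:ℚ) = 0 :=
    single_mul_single_of_ne (h := (Ne.symm hpz)) ..
  have hab : single p z (1:ℚ) * single z.rev p.rev (1:ℚ) = 0 :=
    single_mul_single_of_ne (h := hz) ..
  have hba : single z.rev p.rev (1:ℚ) * single p z (1:ℚ) = 0 :=
    single_mul_single_of_ne (h := (Ne.symm hpr)) ..
  have hb2 : single z.rev p.rev (1:ℚ) * single z.rev p.rev (1:ℚ) = 0 :=
    single_mul_single_of_ne (h := (fun h => hpz (Fin.rev_inj.mp h))) ..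
  obtain ⟨g, hg⟩ : ∃ g : Matrix (Fin N) (Fin N) ℚ,
      g = 1 + single p z (1:ℚ) - single z.rev p.rev 1 := ⟨_, rfl⟩
  obtain ⟨gi, hgi⟩ : ∃ gi : Matrix (Fin N) (Fin N) ℚ,
      gi = 1 - single p z (1:ℚ) + single z.rev p.rev 1 := ⟨_, rfl⟩
  have h1 : g * gi = 1 := by
    rw [hg, hgi]
    simp only [mul_add, add_mul, sub_mul, mul_sub, one_mul, mul_one, ha2, hab, hba, hb2]
    abel
  have h2 : gi * g = 1 := by
    rw [hg, hgi]
    simp only [mul_add, add_mul, sub_mul, mul_sub, one_mul, mul_one, ha2, hab, hba, hb2]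
    abel
  have ho : ∀ x y : Fin N, gi x y = g y.rev x.rev := by
    intro x y
    rw [hg, hgi]
    simp only [Matrix.add_apply, Matrix.sub_apply]
    rw [one_rev x y]
    rw [show single p z (1:ℚ) y.rev x.rev
        = single z.rev p.rev 1 x y from by
      rw [← Erev z.rev p.rev x y 1, Fin.rev_rev, Fin.rev_rev]]
    rw [show single z.rev p.rev (1:ℚ) y.rev x.rev
        = single p z 1 x y from Erev p z x y 1]
    ring
  have hcomm := Smat_comm N m α g gi h1 h2 ho
  rw [hg] at hcomm
  have hentry := congrArg (fun M => M p z) hcomm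
  simp only [Matrix.add_mul, Matrix.sub_mul, Matrix.mul_add, Matrix.mul_sub,
    Matrix.one_mul, Matrix.mul_one, Matrix.add_apply, Matrix.sub_apply, E_mul, mul_E] at hentry
  rw [if_neg hpzr, if_neg (fun h : z = p.rev => hpzr (by rw [h, Fin.rev_rev]))] at hentry
  simp only [if_true] at hentry
  have hoff := Smat_offdiag N m α p z hpz
  rw [hoff] at hentry
  linarith [hentry]

lemma Smat_diag_stepB (N m : ℕ) (α : Equiv.Perm (Fin m)) (p z : Fin N)
    (hpz : p ≠ z) (hpr : p = p.rev) (hz : z ≠ z.rev) :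
    Smat N m α p p = Smat N m α z z := by
  have hpzr : p ≠ z.rev := fun h => hpz (by
    have : z = p.rev := by rw [h, Fin.rev_rev]
    rw [this, ← hpr])
  have hzrp : z.rev ≠ p := fun h => hpzr h.symm
  have ha2 : single p z (1:ℚ) * single p z (1:ℚ) = 0 :=
    single_mul_single_of_ne (h := (Ne.symm hpz)) ..
  have hab : single p z (1:ℚ) * single z.rev p (1:ℚ) = 0 :=
    single_mul_single_of_ne (h := hz) ..
  have hae : single p z (1:ℚ) * single z.rev z ((1:ℚ)/2) = 0 :=
    single_mul_single_of_ne (h := hz) ..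
  have hba : single z.rev p (1:ℚ) * single p z (1:ℚ)
      = single z.rev z (1:ℚ) := by
    rw [single_mul_single_same, one_mul]
  have hb2 : single z.rev p (1:ℚ) * single z.rev p (1:ℚ) = 0 :=
    single_mul_single_of_ne (h := hpzr) ..
  have hbe : single z.rev p (1:ℚ) * single z.rev z ((1:ℚ)/2) = 0 :=
    single_mul_single_of_ne (h := hpzr) ..
  have hea : single z.rev z ((1:ℚ)/2) * single p z (1:ℚ) = 0 :=
    single_mul_single_of_ne (h := (Ne.symm hpz)) ..
  have heb : single z.rev z ((1:ℚ)/2) * single z.rev p (1:ℚ) = 0 :=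
    single_mul_single_of_ne (h := hz) ..
  have he2 : single z.rev z ((1:ℚ)/2) * single z.rev z ((1:ℚ)/2) = 0 :=
    single_mul_single_of_ne (h := hz) ..
  have hsplit : single z.rev z (1:ℚ)
      = single z.rev z ((1:ℚ)/2) + single z.rev z ((1:ℚ)/2) := by
    rw [← single_add]
    norm_num
  obtain ⟨g, hg⟩ : ∃ g : Matrix (Fin N) (Fin N) ℚ,
      g = 1 + single p z (1:ℚ) - single z.rev p 1
        - single z.rev z ((1:ℚ)/2) := ⟨_, rfl⟩
  obtain ⟨gi, hgi⟩ : ∃ gi : Matrix (Fin N) (Fin N) ℚ,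
      gi = 1 - single p z (1:ℚ) + single z.rev p 1
        - single z.rev z ((1:ℚ)/2) := ⟨_, rfl⟩
  have h1 : g * gi = 1 := by
    rw [hg, hgi]
    simp only [mul_add, add_mul, sub_mul, mul_sub, one_mul, mul_one,
      ha2, hab, hae, hba, hb2, hbe, hea, heb, he2, hsplit]
    abel
  have h2 : gi * g = 1 := by
    rw [hg, hgi]
    simp only [mul_add, add_mul, sub_mul, mul_sub, one_mul, mul_one,
      ha2, hab, hae, hba, hb2, hbe, hea, heb, he2, hsplit]
    abel
  have ho : ∀ x y : Fin N, gi x y = g y.rev x.rev := by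
    intro x y
    rw [hg, hgi]
    simp only [Matrix.add_apply, Matrix.sub_apply]
    rw [one_rev x y]
    rw [show single p z (1:ℚ) y.rev x.rev
        = single z.rev p 1 x y from by
      rw [← Erev z.rev p x y 1, Fin.rev_rev, ← hpr]]
    rw [show single z.rev p (1:ℚ) y.rev x.rev
        = single p z 1 x y from by
      rw [← Erev p z x y 1, ← hpr]]
    rw [show single z.rev z ((1:ℚ)/2) y.rev x.rev
        = single z.rev z ((1:ℚ)/2) x y from by
      rw [← Erev z.rev z x y ((1:ℚ)/2), Fin.rev_rev]]
    ring
  have hcomm := Smat_comm N m α g gi h1 h2 ho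
  rw [hg] at hcomm
  have hentry := congrArg (fun M => M p z) hcomm
  simp only [Matrix.add_mul, Matrix.sub_mul, Matrix.mul_add, Matrix.mul_sub,
    Matrix.one_mul, Matrix.mul_one, Matrix.add_apply, Matrix.sub_apply, E_mul, mul_E] at hentry
  rw [if_neg hpzr, if_neg hpzr, if_neg (Ne.symm hpz)] at hentry
  simp only [if_true] at hentry
  rw [Smat_offdiag N m α p z hpz, Smat_offdiag N m α p z.rev hpzr] at hentry
  linarith [hentry]

lemma Smat_scalar (N m : ℕ) (hN : 1 ≤ N) (α : Equiv.Perm (Fin m)) :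
    Smat N m α = (Smat N m α ⟨0, hN⟩ ⟨0, hN⟩) • (1 : Matrix (Fin N) (Fin N) ℚ) := by
  set z : Fin N := ⟨0, hN⟩ with hzdef
  ext a b
  by_cases hab : a = b
  · subst hab
    rw [Matrix.smul_apply, Matrix.one_apply_eq, smul_eq_mul, mul_one]
    by_cases h1 : a = z
    · rw [h1]
    · by_cases h2 : a = z.rev
      · rw [h2]
        exact Smat_diag_rev N m α z
      · have hz : z ≠ z.rev := by
          intro h
          apply h1
          have hval := congrArg Fin.val h
          rw [Fin.val_rev] at hval
          have haval := a.isLt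
          have hzval : z.val = 0 := rfl
          apply Fin.ext
          omega
        by_cases h3 : a = a.rev
        · exact Smat_diag_stepB N m α a z h1 h3 hz
        · exact Smat_diag_stepA N m α a z h1 h2 h3 hz
  · rw [Smat_offdiag N m α a b hab, Matrix.smul_apply, Matrix.one_apply_ne hab, smul_zero]

lemma Smat_trace (N m : ℕ) (hN : 1 ≤ N) (α : Equiv.Perm (Fin m)) :
    (Smat N m α).trace = (N : ℚ) * Smat N m α ⟨0, hN⟩ ⟨0, hN⟩ := by
  conv_lhs => rw [Smat_scalar N m hN α]
  rw [Matrix.trace_smul, Matrix.trace_one]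
  simp [mul_comm]

lemma finRange_add (m n : ℕ) : List.finRange (m+n)
    = (List.finRange m).map (Fin.castAdd n) ++ (List.finRange n).map (Fin.natAdd m) := by
  apply List.map_injective_iff.mpr Fin.val_injective
  simp [List.map_map, List.range_add, Function.comp_def]
  exact List.ext_getElem (by simp) (by simp)

lemma Smat_concat (N m₁ m₂ : ℕ) (α₁ : Equiv.Perm (Fin m₁)) (α₂ : Equiv.Perm (Fin m₂)) :
    Smat N (m₁ + m₂) (permConcat α₁ α₂) = Smat N m₁ α₁ * Smat N m₂ α₂ := by
  have hper1 : ∀ k, permConcat α₁ α₂ (Fin.castAdd m₂ k) = Fin.castAdd m₂ (α₁ k) := by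
    intro k
    simp [permConcat, Equiv.permCongr_apply, finSumFinEquiv_symm_apply_castAdd]
  have hper2 : ∀ l, permConcat α₁ α₂ (Fin.natAdd m₁ l) = Fin.natAdd m₁ (α₂ l) := by
    intro l
    simp [permConcat, Equiv.permCongr_apply, finSumFinEquiv_symm_apply_natAdd]
  let e : ((Fin m₁ → Fin N) × (Fin m₂ → Fin N)) ≃ (Fin (m₁ + m₂) → Fin N) :=
    (Equiv.sumArrowEquivProdArrow (Fin m₁) (Fin m₂) (Fin N)).symm.trans
      (Equiv.arrowCongr finSumFinEquiv (Equiv.refl (Fin N)))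
  have he1 : ∀ (x : (Fin m₁ → Fin N) × (Fin m₂ → Fin N)) (k : Fin m₁),
      e x (Fin.castAdd m₂ k) = x.1 k := by
    intro x k
    simp [e, Equiv.arrowCongr, Equiv.sumArrowEquivProdArrow,
      finSumFinEquiv_symm_apply_castAdd]
  have he2 : ∀ (x : (Fin m₁ → Fin N) × (Fin m₂ → Fin N)) (l : Fin m₂),
      e x (Fin.natAdd m₁ l) = x.2 l := by
    intro x l
    simp [e, Equiv.arrowCongr, Equiv.sumArrowEquivProdArrow,
      finSumFinEquiv_symm_apply_natAdd]
  unfold Smat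
  rw [← Equiv.sum_comp e (fun i : Fin (m₁ + m₂) → Fin N =>
    ((List.finRange (m₁+m₂)).map fun k => soGen N (i k) (i (permConcat α₁ α₂ k))).prod)]
  rw [Finset.sum_mul_sum]
  rw [← Fintype.sum_prod_type']
  apply Finset.sum_congr rfl
  intro x _
  rw [finRange_add, List.map_append, List.prod_append, List.map_map, List.map_map]
  congr 1
  · apply congrArg
    apply List.map_congr_left
    intro k _
    simp only [Function.comp_apply, hper1, he1]
  · apply congrArg
    apply List.map_congr_left
    intro l _
    simp only [Function.comp_apply, hper2, he2]

/-- Multiplicativity of the standard-representation so(N) weight under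
concatenation: `N ⬝ W_N(α₁ # α₂) = W_N(α₁) ⬝ W_N(α₂)`, i.e. the normalized
weight `W_N/N` is multiplicative. -/
theorem soWeight_concat (N : ℕ) (hN : 1 ≤ N) {m₁ m₂ : ℕ}
    (α₁ : Equiv.Perm (Fin m₁)) (α₂ : Equiv.Perm (Fin m₂)) :
    (N : ℚ) * soWeight N (m₁ + m₂) (permConcat α₁ α₂) =
      soWeight N m₁ α₁ * soWeight N m₂ α₂ := by
  have h1 : soWeight N (m₁+m₂) (permConcat α₁ α₂)
      = (Smat N (m₁+m₂) (permConcat α₁ α₂)).trace := rfl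
  have h2 : soWeight N m₁ α₁ = (Smat N m₁ α₁).trace := rfl
  have h3 : soWeight N m₂ α₂ = (Smat N m₂ α₂).trace := rfl
  rw [h1, h2, h3, Smat_concat]
  conv_lhs => rw [Smat_scalar N m₁ hN α₁]
  rw [Matrix.smul_mul, Matrix.one_mul, Matrix.trace_smul, Smat_trace N m₁ hN α₁]
  simp only [smul_eq_mul]
  ring
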